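/- Let σ be a feasible solution of the reduced EVSP instance whose number of served customers is maximum among all feasible solutions. Then the number of vehicles that serve at least one item customer under σ, plus the number of item customers left unserved by σ, equals opt_BPP; consequently, forming one bin from the item customers served by each item-serving vehicle and one singleton bin from each unserved item yields an optimal bin packing of the items. -/

import Mathlib

open Finset

/-- A bin packing of the `n` items with sizes `ℓ` : a collection `P` of bins (finsets of items)
such that every bin is nonempty, the total size of each bin is at most `1`, and every item
belongs to exactly one bin (i.e. `P` is a partition of `Fin n`). -/
def IsBinPacking (n : ℕ) (ℓ : Fin n → ℝ) (P : Finset (Finset (Fin n))) : Prop :=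
  (∀ p ∈ P, p.Nonempty) ∧ (∀ p ∈ P, ∑ i ∈ p, ℓ i ≤ 1) ∧
  (∀ i : Fin n, ∃! p : Finset (Fin n), p ∈ P ∧ i ∈ p)

/-- The optimal number of bins for the bin packing problem. -/
noncomputable def optBPP (n : ℕ) (ℓ : Fin n → ℝ) : ℕ :=
  sInf {k : ℕ | ∃ P : Finset (Finset (Fin n)), IsBinPacking n ℓ P ∧ P.card = k}

/-- A feasible solution of the reduced EVSP instance: customers are `Fin n ⊕ Fin n`
(`Sum.inl i` is item customer `i`, `Sum.inr j` is dummy customer `j`); `σ c = some v` means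
customer `c` is served by vehicle `v`, `σ c = none` means `c` is unserved.
(i) each vehicle's item customers have total energy at most `1` (the battery capacity);
(ii) a vehicle serving a dummy customer serves no other customer. -/
def Feasible (n : ℕ) (ℓ : Fin n → ℝ) (σ : Fin n ⊕ Fin n → Option (Fin n)) : Prop :=
  (∀ v : Fin n, ∑ i ∈ Finset.univ.filter (fun i : Fin n => σ (Sum.inl i) = some v), ℓ i ≤ 1) ∧
  (∀ v j : Fin n, σ (Sum.inr j) = some v →
    ∀ c : Fin n ⊕ Fin n, c ≠ Sum.inr j → σ c ≠ some v)

/-- The number of customers served by `σ`. -/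
def servedCount (n : ℕ) (σ : Fin n ⊕ Fin n → Option (Fin n)) : ℕ :=
  (Finset.univ.filter (fun c : Fin n ⊕ Fin n => σ c ≠ none)).card

/-- The number of dummy customers served by `σ`. -/
def dummyServed (n : ℕ) (σ : Fin n ⊕ Fin n → Option (Fin n)) : ℕ :=
  (Finset.univ.filter (fun j : Fin n => σ (Sum.inr j) ≠ none)).card

/-- The set of vehicles that serve at least one item customer under `σ`. -/
def itemVehicles (n : ℕ) (σ : Fin n ⊕ Fin n → Option (Fin n)) : Finset (Fin n) :=
  Finset.univ.filter (fun v : Fin n => ∃ i : Fin n, σ (Sum.inl i) = some v)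

lemma servedCount_split (n : ℕ) (σ : Fin n ⊕ Fin n → Option (Fin n)) :
    servedCount n σ =
      (Finset.univ.filter (fun i : Fin n => σ (Sum.inl i) ≠ none)).card +
      (Finset.univ.filter (fun j : Fin n => σ (Sum.inr j) ≠ none)).card := by
  classical
  unfold servedCount
  rw [Finset.card_filter, Finset.card_filter, Finset.card_filter, Fintype.sum_sum_type]

lemma packing_card_le (n : ℕ) (ℓ : Fin n → ℝ) (P : Finset (Finset (Fin n)))
    (hP : IsBinPacking n ℓ P) : P.card ≤ n := by
  classical
  have hdisj : ∀ p ∈ P, ∀ q ∈ P, p ≠ q → Disjoint (id p) (id q) := by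
    intro p hp q hq hpq
    rw [Finset.disjoint_left]
    intro i hip hiq
    obtain ⟨r, _, hr⟩ := hP.2.2 i
    exact hpq ((hr p ⟨hp, hip⟩).trans (hr q ⟨hq, hiq⟩).symm)
  calc P.card = ∑ p ∈ P, 1 := by simp
    _ ≤ ∑ p ∈ P, p.card := Finset.sum_le_sum (fun p hp => (hP.1 p hp).card_pos)
    _ = (P.biUnion id).card := (Finset.card_biUnion hdisj).symm
    _ ≤ (Finset.univ : Finset (Fin n)).card := Finset.card_le_card (Finset.subset_univ _)
    _ = n := by simp

lemma dummy_bound (n : ℕ) (hn : 1 ≤ n) (ℓ : Fin n → ℝ)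
    (σ : Fin n ⊕ Fin n → Option (Fin n)) (hσ : Feasible n ℓ σ) :
    (Finset.univ.filter (fun j : Fin n => σ (Sum.inr j) ≠ none)).card
      + (itemVehicles n σ).card ≤ n := by
  classical
  set D := Finset.univ.filter (fun j : Fin n => σ (Sum.inr j) ≠ none) with hD
  have z : Fin n := ⟨0, hn⟩
  set f : Fin n → Fin n := fun j => (σ (Sum.inr j)).getD z with hf
  have hserve : ∀ j ∈ D, σ (Sum.inr j) = some (f j) := by
    intro j hj
    rw [hD, Finset.mem_filter] at hj
    obtain ⟨v, hv⟩ := Option.ne_none_iff_exists'.mp hj.2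
    rw [hf]; simp [hv]
  have hinj : Set.InjOn f D := by
    intro j hj j' hj' hjj'
    by_contra hne
    exact hσ.2 (f j) j (hserve j hj) (Sum.inr j') (by simp [Ne.symm hne])
      (hjj' ▸ hserve j' hj')
  have hcard : D.card = (D.image f).card := (Finset.card_image_of_injOn hinj).symm
  have hsub : D.image f ⊆ Finset.univ \ itemVehicles n σ := by
    intro v hv
    rw [Finset.mem_image] at hv
    obtain ⟨j, hj, rfl⟩ := hv
    rw [Finset.mem_sdiff]
    refine ⟨Finset.mem_univ _, ?_⟩
    rw [itemVehicles, Finset.mem_filter]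
    rintro ⟨-, i, hi⟩
    exact hσ.2 (f j) j (hserve j hj) (Sum.inl i) (by simp) hi
  have := Finset.card_le_card hsub
  rw [Finset.card_sdiff_of_subset (Finset.subset_univ _), Finset.card_univ, Fintype.card_fin] at this
  have h2 : (itemVehicles n σ).card ≤ n := by
    simpa using Finset.card_le_card (Finset.subset_univ (itemVehicles n σ))
  omega

lemma tau_exists (n : ℕ) (ℓ : Fin n → ℝ)
    (P : Finset (Finset (Fin n))) (hP : IsBinPacking n ℓ P) (hkn : P.card ≤ n) :
    ∃ τ : Fin n ⊕ Fin n → Option (Fin n),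
      Feasible n ℓ τ ∧ servedCount n τ = n + (n - P.card) := by
  classical
  set k := P.card with hk
  let e : {p // p ∈ P} ≃ Fin k := P.equivFin
  let g : {p // p ∈ P} → Fin n := fun p => Fin.castLE hkn (e p)
  have hg : Function.Injective g := fun p q h =>
    e.injective (Fin.castLE_injective hkn h)
  let b : Fin n → {p // p ∈ P} := fun i => ⟨(hP.2.2 i).choose, (hP.2.2 i).choose_spec.1.1⟩
  have hbmem : ∀ i, i ∈ (b i : Finset (Fin n)) := fun i => (hP.2.2 i).choose_spec.1.2
  have hbuniq : ∀ (i : Fin n) (p : {p // p ∈ P}), i ∈ (p : Finset (Fin n)) → b i = p := by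
    intro i p hip
    exact Subtype.ext ((hP.2.2 i).choose_spec.2 p.1 ⟨p.2, hip⟩).symm
  set T : Finset (Fin n) := Finset.univ \ Finset.univ.image g with hT
  have hTcard : T.card = n - k := by
    rw [hT, Finset.card_sdiff_of_subset (Finset.subset_univ _),
      Finset.card_image_of_injective _ hg]
    simp [hk]
  let τ : Fin n ⊕ Fin n → Option (Fin n) := fun c =>
    match c with
    | Sum.inl i => some (g (b i))
    | Sum.inr j =>
      if h : (j : ℕ) < T.card then some ((T.equivFin.symm ⟨j, h⟩ : {x // x ∈ T}) : Fin n)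
      else none
  have hdummyT : ∀ j v, τ (Sum.inr j) = some v → v ∈ T := by
    intro j v h
    simp only [τ] at h
    split at h
    · exact (Option.some_injective _ h) ▸ (T.equivFin.symm _).2
    · exact absurd h (by simp)
  refine ⟨τ, ⟨?_, ?_⟩, ?_⟩
  · intro v
    by_cases hv : ∃ p : {p // p ∈ P}, g p = v
    · obtain ⟨p, rfl⟩ := hv
      have : Finset.univ.filter (fun i : Fin n => τ (Sum.inl i) = some (g p))
          = (p : Finset (Fin n)) := by
        ext i
        simp only [Finset.mem_filter, Finset.mem_univ, true_and, τ, Option.some.injEq]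
        constructor
        · intro h
          have := hg h
          rw [← this]; exact hbmem i
        · intro h
          rw [hbuniq i p h]
      rw [this]
      exact hP.2.1 p p.2
    · have : Finset.univ.filter (fun i : Fin n => τ (Sum.inl i) = some v) = ∅ := by
        ext i
        simp only [Finset.mem_filter, Finset.mem_univ, true_and, τ, Option.some.injEq,
          Finset.notMem_empty, iff_false]
        intro h
        exact hv ⟨b i, h⟩
      rw [this]
      simp
  · intro v j hjv c hc
    have hvT := hdummyT j v hjv
    have hvimg : v ∉ Finset.univ.image g := (Finset.mem_sdiff.mp hvT).2
    match c with
    | Sum.inl i =>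
      simp only [τ, Option.some.injEq]
      intro h
      have h' : g (b i) = v := Option.some_injective _ h
      exact hvimg (h' ▸ Finset.mem_image_of_mem g (Finset.mem_univ (b i)))
    | Sum.inr j' =>
      intro h
      simp only [τ] at h hjv
      split at h
      · split at hjv
        · have h1 := Option.some_injective _ h
          have h2 := Option.some_injective _ hjv
          have : (⟨(j' : ℕ), by assumption⟩ : Fin T.card) = ⟨(j : ℕ), by assumption⟩ := by
            apply T.equivFin.symm.injective
            exact Subtype.coe_injective (h1.trans h2.symm)
          apply hc
          rw [Fin.mk.injEq] at this
          exact congrArg Sum.inr (Fin.ext this)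
        · exact absurd hjv (by simp)
      · exact absurd h (by simp)
  · rw [servedCount_split]
    have h1 : Finset.univ.filter (fun i : Fin n => τ (Sum.inl i) ≠ none) = Finset.univ := by
      ext i; simp [τ]
    have h2 : Finset.univ.filter (fun j : Fin n => τ (Sum.inr j) ≠ none)
        = Finset.univ.filter (fun j : Fin n => (j : ℕ) < T.card) := by
      ext j
      simp only [Finset.mem_filter, Finset.mem_univ, true_and, τ]
      split
      case isTrue h => simpa using h
      case isFalse h => simpa using h
    have h3 : (Finset.univ.filter (fun j : Fin n => (j : ℕ) < T.card)).card = n - k := by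
      have himg : Finset.image Fin.val
          (Finset.univ.filter (fun j : Fin n => (j : ℕ) < T.card)) = Finset.range (n - k) := by
        ext x
        simp only [Finset.mem_image, Finset.mem_filter, Finset.mem_univ, true_and,
          Finset.mem_range, hTcard]
        constructor
        · rintro ⟨j, hj, rfl⟩; exact hj
        · intro hx
          exact ⟨⟨x, lt_of_lt_of_le hx (Nat.sub_le n k)⟩, hx, rfl⟩
      rw [← Finset.card_image_of_injective _ Fin.val_injective, himg, Finset.card_range]
    rw [h1, h2, h3, Finset.card_univ, Fintype.card_fin]

lemma sigma_packing (n : ℕ) (ℓ : Fin n → ℝ) (hℓ : ∀ i : Fin n, 0 < ℓ i ∧ ℓ i ≤ 1)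
    (σ : Fin n ⊕ Fin n → Option (Fin n)) (hσ : Feasible n ℓ σ) :
    IsBinPacking n ℓ
      ((itemVehicles n σ).image
          (fun v : Fin n => Finset.univ.filter (fun i : Fin n => σ (Sum.inl i) = some v)) ∪
        (Finset.univ.filter (fun i : Fin n => σ (Sum.inl i) = none)).image
          (fun i : Fin n => {i})) ∧
    ((itemVehicles n σ).image
          (fun v : Fin n => Finset.univ.filter (fun i : Fin n => σ (Sum.inl i) = some v)) ∪
        (Finset.univ.filter (fun i : Fin n => σ (Sum.inl i) = none)).image
          (fun i : Fin n => {i})).card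
      = (itemVehicles n σ).card
        + (Finset.univ.filter (fun i : Fin n => σ (Sum.inl i) = none)).card := by
  classical
  set F : Fin n → Finset (Fin n) :=
    fun v => Finset.univ.filter (fun i : Fin n => σ (Sum.inl i) = some v) with hF
  set U : Finset (Fin n) := Finset.univ.filter (fun i : Fin n => σ (Sum.inl i) = none) with hU
  have memF : ∀ v i, i ∈ F v ↔ σ (Sum.inl i) = some v := by
    intro v i; simp [hF]
  have memU : ∀ i, i ∈ U ↔ σ (Sum.inl i) = none := by
    intro i; simp [hU]
  constructor
  · refine ⟨?_, ?_, ?_⟩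
    · intro p hp
      rcases Finset.mem_union.mp hp with h | h
      · obtain ⟨v, hv, rfl⟩ := Finset.mem_image.mp h
        obtain ⟨i, hi⟩ := (Finset.mem_filter.mp hv).2
        exact ⟨i, (memF v i).mpr hi⟩
      · obtain ⟨i, _, rfl⟩ := Finset.mem_image.mp h
        exact ⟨i, Finset.mem_singleton_self i⟩
    · intro p hp
      rcases Finset.mem_union.mp hp with h | h
      · obtain ⟨v, _, rfl⟩ := Finset.mem_image.mp h
        exact hσ.1 v
      · obtain ⟨i, _, rfl⟩ := Finset.mem_image.mp h
        simpa using (hℓ i).2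
    · intro i
      cases h : σ (Sum.inl i) with
      | some v =>
        refine ⟨F v, ⟨Finset.mem_union_left _ (Finset.mem_image_of_mem F ?_),
          (memF v i).mpr h⟩, ?_⟩
        · exact Finset.mem_filter.mpr ⟨Finset.mem_univ _, ⟨i, h⟩⟩
        · rintro q ⟨hq, hiq⟩
          rcases Finset.mem_union.mp hq with h' | h'
          · obtain ⟨w, _, rfl⟩ := Finset.mem_image.mp h'
            have := (memF w i).mp hiq
            rw [h] at this
            rw [Option.some_injective _ this]
          · obtain ⟨j, hj, rfl⟩ := Finset.mem_image.mp h'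
            have : i = j := Finset.mem_singleton.mp hiq
            rw [← this] at hj
            rw [(memU i).mp hj] at h
            exact absurd h (by simp)
      | none =>
        refine ⟨{i}, ⟨Finset.mem_union_right _
          (Finset.mem_image_of_mem _ ((memU i).mpr h)), Finset.mem_singleton_self i⟩, ?_⟩
        rintro q ⟨hq, hiq⟩
        rcases Finset.mem_union.mp hq with h' | h'
        · obtain ⟨w, _, rfl⟩ := Finset.mem_image.mp h'
          rw [(memF w i).mp hiq] at h
          exact absurd h (by simp)
        · obtain ⟨j, _, rfl⟩ := Finset.mem_image.mp h'
          rw [Finset.mem_singleton.mp hiq]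
  · rw [Finset.card_union_of_disjoint, Finset.card_image_of_injOn,
      Finset.card_image_of_injective _ Finset.singleton_injective]
    · intro v hv w hw hvw
      obtain ⟨i, hi⟩ := (Finset.mem_filter.mp hv).2
      have : i ∈ F w := hvw ▸ (memF v i).mpr hi
      have := (memF w i).mp this
      rw [hi] at this
      exact Option.some_injective _ this
    · rw [Finset.disjoint_left]
      intro p hp hp'
      obtain ⟨v, _, rfl⟩ := Finset.mem_image.mp hp
      obtain ⟨j, hj, hj'⟩ := Finset.mem_image.mp hp'
      have h2 : j ∈ F v := hj' ▸ Finset.mem_singleton_self j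
      have h3 := (memF v j).mp h2
      rw [(memU j).mp hj] at h3
      exact absurd h3 (by simp)

lemma singleton_packing (n : ℕ) (ℓ : Fin n → ℝ) (hℓ : ∀ i : Fin n, 0 < ℓ i ∧ ℓ i ≤ 1) :
    IsBinPacking n ℓ (Finset.univ.image (fun i : Fin n => ({i} : Finset (Fin n)))) := by
  classical
  refine ⟨?_, ?_, ?_⟩
  · intro p hp
    obtain ⟨i, _, rfl⟩ := Finset.mem_image.mp hp
    exact ⟨i, Finset.mem_singleton_self i⟩
  · intro p hp
    obtain ⟨i, _, rfl⟩ := Finset.mem_image.mp hp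
    simpa using (hℓ i).2
  · intro i
    refine ⟨{i}, ⟨Finset.mem_image_of_mem _ (Finset.mem_univ i),
      Finset.mem_singleton_self i⟩, ?_⟩
    rintro q ⟨hq, hiq⟩
    obtain ⟨j, _, rfl⟩ := Finset.mem_image.mp hq
    rw [Finset.mem_singleton.mp hiq]

/-- Let `σ` be a feasible solution maximizing the number of served customers.  Then the number of
vehicles serving at least one item customer, plus the number of unserved item customers, equals
`optBPP`; consequently, forming one bin from the item customers served by each item-serving
vehicle and one singleton bin from each unserved item yields an optimal bin packing. -/
theorem stmt_7 (n : ℕ) (hn : 1 ≤ n) (ℓ : Fin n → ℝ)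
    (hℓ : ∀ i : Fin n, 0 < ℓ i ∧ ℓ i ≤ 1)
    (σ : Fin n ⊕ Fin n → Option (Fin n)) (hσ : Feasible n ℓ σ)
    (hmax : ∀ τ : Fin n ⊕ Fin n → Option (Fin n), Feasible n ℓ τ →
      servedCount n τ ≤ servedCount n σ) :
    (itemVehicles n σ).card
        + (Finset.univ.filter (fun i : Fin n => σ (Sum.inl i) = none)).card
      = optBPP n ℓ ∧
    IsBinPacking n ℓ
      ((itemVehicles n σ).image
          (fun v : Fin n => Finset.univ.filter (fun i : Fin n => σ (Sum.inl i) = some v)) ∪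
        (Finset.univ.filter (fun i : Fin n => σ (Sum.inl i) = none)).image
          (fun i : Fin n => {i})) ∧
    ((itemVehicles n σ).image
          (fun v : Fin n => Finset.univ.filter (fun i : Fin n => σ (Sum.inl i) = some v)) ∪
        (Finset.univ.filter (fun i : Fin n => σ (Sum.inl i) = none)).image
          (fun i : Fin n => {i})).card = optBPP n ℓ := by
  classical
  have hne : {k : ℕ | ∃ P : Finset (Finset (Fin n)), IsBinPacking n ℓ P ∧ P.card = k}.Nonempty :=
    ⟨_, _, singleton_packing n ℓ hℓ, rfl⟩
  obtain ⟨P, hP, hPcard⟩ :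
      ∃ P : Finset (Finset (Fin n)), IsBinPacking n ℓ P ∧ P.card = optBPP n ℓ :=
    Nat.sInf_mem hne
  have hkn := packing_card_le n ℓ P hP
  obtain ⟨τ, hτ, hτcount⟩ := tau_exists n ℓ P hP hkn
  have h1 := hmax τ hτ
  rw [hτcount, servedCount_split] at h1
  have h2 := dummy_bound n hn ℓ σ hσ
  have h3 : (Finset.univ.filter (fun i : Fin n => σ (Sum.inl i) = none)).card
      + (Finset.univ.filter (fun i : Fin n => σ (Sum.inl i) ≠ none)).card = n := by
    rw [Finset.card_filter_add_card_filter_not]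
    simp
  obtain ⟨hpack, hcard⟩ := sigma_packing n ℓ hℓ σ hσ
  have hub : optBPP n ℓ ≤ (itemVehicles n σ).card
      + (Finset.univ.filter (fun i : Fin n => σ (Sum.inl i) = none)).card :=
    Nat.sInf_le ⟨_, hpack, hcard⟩
  have heq : (itemVehicles n σ).card
      + (Finset.univ.filter (fun i : Fin n => σ (Sum.inl i) = none)).card = optBPP n ℓ := by
    omega
  exact ⟨heq, hpack, hcard.trans heq⟩
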